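/- In the braid group B_n with the Dehornoy ordering, the ordering is discrete and σ₁ is the least positive element: for every β ∈ B_n with 1 < β, one has σ₁ ≤ β. -/

import Mathlib

/-- The braid relations on generators indexed by `Fin m` (generator `i` is `σ_{i+1}`). -/
def braidRels (m : ℕ) : Set (FreeGroup (Fin m)) :=
  {r | (∃ i j : Fin m, (i : ℕ) + 1 < (j : ℕ) ∧
        r = FreeGroup.of i * FreeGroup.of j * (FreeGroup.of i)⁻¹ * (FreeGroup.of j)⁻¹) ∨
       (∃ i j : Fin m, (i : ℕ) + 1 = (j : ℕ) ∧
        r = FreeGroup.of i * FreeGroup.of j * FreeGroup.of i *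
            (FreeGroup.of j * FreeGroup.of i * FreeGroup.of j)⁻¹)}

/-- The Artin braid group `B_n`, presented with generators `σ₁, …, σ_{n-1}`. -/
abbrev BraidGroup (n : ℕ) := PresentedGroup (braidRels (n - 1))

/-- The Artin generator; `braidGen i` represents `σ_{i+1}`. -/
def braidGen {n : ℕ} (i : Fin (n - 1)) : BraidGroup n := PresentedGroup.of i

/-- `σ_k` (1-indexed), or `1` if out of range. -/
def sigma' (n k : ℕ) : BraidGroup n :=
  if h : k - 1 < n - 1 then braidGen ⟨k - 1, h⟩ else 1

/-- A braid is `i`-positive (`i : Fin (n-1)` standing for `σ_{i+1}`) if it is represented by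
a word using only generators of index ≤ i, in which generator `i` occurs, and only with
positive exponent. -/
def IsIPositive {n : ℕ} (β : BraidGroup n) (i : Fin (n - 1)) : Prop :=
  ∃ w : FreeGroup (Fin (n - 1)), PresentedGroup.mk (braidRels (n - 1)) w = β ∧
    (∀ l ∈ w.toWord, l.1 ≤ i ∧ (l.1 = i → l.2 = true)) ∧ (∃ l ∈ w.toWord, l.1 = i)

/-- A braid is `i`-negative if its inverse is `i`-positive. -/
def IsINegative {n : ℕ} (β : BraidGroup n) (i : Fin (n - 1)) : Prop :=
  IsIPositive β⁻¹ i

/-- Dehornoy-positive braids: `i`-positive for some `i`. -/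
def DPos {n : ℕ} (β : BraidGroup n) : Prop := ∃ i, IsIPositive β i

/-- The Dehornoy ordering on `B_n`. -/
def DLt {n : ℕ} (a b : BraidGroup n) : Prop := DPos (a⁻¹ * b)

/-- The copy of `B_r` inside `B_n` generated by `σ₁, …, σ_{r-1}`. -/
def braidSub (n r : ℕ) : Subgroup (BraidGroup n) :=
  Subgroup.closure {β | ∃ i : Fin (n - 1), (i : ℕ) < r - 1 ∧ β = braidGen i}

/-- `σ_a σ_{a-1} ⋯ σ_b` (1-indexed). -/
def descSeg (n a b : ℕ) : BraidGroup n :=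
  (((List.range (a - b + 1)).map fun j => sigma' n (a - j)).prod)

/-- The Garside half twist `Δ_k = (σ_{k-1}⋯σ₁)(σ_{k-1}⋯σ₂)⋯(σ_{k-1}σ_{k-2})(σ_{k-1})`
viewed in `B_n`. -/
def Delta (n k : ℕ) : BraidGroup n :=
  (((List.range (k - 1)).map fun m => descSeg n (k - 1) (m + 1)).prod)

/-- The Dehornoy ordering of `B_n` is discrete with least positive element `σ₁`:
every Dehornoy-positive braid `β` satisfies `σ₁ ≤ β`.  (Dehornoy's theorem, that the
`i`-positive braids form the positive cone of a left-ordering, is taken as hypothesis.) -/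
theorem stmt_6 {n : ℕ} (hn : 2 ≤ n)
    (hmul : ∀ a b : BraidGroup n, DPos a → DPos b → DPos (a * b))
    (htri : ∀ a : BraidGroup n,
      (a = 1 ∧ ¬DPos a ∧ ¬DPos a⁻¹) ∨ (DPos a ∧ a ≠ 1 ∧ ¬DPos a⁻¹) ∨
      (DPos a⁻¹ ∧ a ≠ 1 ∧ ¬DPos a)) :
    DPos (braidGen (⟨0, by omega⟩ : Fin (n - 1))) ∧
    ∀ β : BraidGroup n, DPos β →
      β = braidGen (⟨0, by omega⟩ : Fin (n - 1)) ∨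
        DLt (braidGen (⟨0, by omega⟩ : Fin (n - 1))) β := by
  set i0 : Fin (n - 1) := ⟨0, by omega⟩ with hi0
  constructor
  · exact ⟨i0, FreeGroup.of i0, rfl, by simp [FreeGroup.toWord_of], by simp [FreeGroup.toWord_of]⟩
  · rintro β ⟨i, w, hw, hall, l₀, hl₀, hl₀i⟩
    -- inverse of σ₁ as a free group element
    have hinv : (FreeGroup.of i0)⁻¹ = FreeGroup.mk [(i0, false)] := by
      rw [show (FreeGroup.of i0) = FreeGroup.mk [(i0, true)] from rfl, FreeGroup.inv_mk]
      simp [FreeGroup.invRev]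
    have hw' : PresentedGroup.mk (braidRels (n - 1))
        (FreeGroup.mk ((i0, false) :: w.toWord)) = (braidGen i0)⁻¹ * β := by
      rw [show ((i0, false) :: w.toWord) = [(i0, false)] ++ w.toWord from rfl,
        ← FreeGroup.mul_mk, FreeGroup.mk_toWord, map_mul, ← hinv, map_inv]
      rw [hw]; rfl
    -- compute the reduced word
    have hred : FreeGroup.reduce ((i0, false) :: w.toWord)
        = List.casesOn w.toWord [(i0, false)] (fun hd tl =>
            if (i0 : Fin (n-1)) = hd.1 ∧ false = !hd.2 then tl
            else (i0, false) :: hd :: tl) := by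
      rw [FreeGroup.reduce.cons, FreeGroup.reduce_toWord]
    rcases hW : w.toWord with _ | ⟨hd, tl⟩
    · rw [hW] at hl₀; simp at hl₀
    · rw [hW] at hred hall hl₀
      by_cases hc : (i0 : Fin (n-1)) = hd.1 ∧ false = !hd.2
      · -- cancellation: reduced word is tl
        have htl : (FreeGroup.mk ((i0, false) :: w.toWord)).toWord = tl := by
          rw [FreeGroup.toWord_mk, hW, hred]; exact if_pos hc
        have hhd : hd = (i0, true) := by
          obtain ⟨h1, h2⟩ := hc
          have : hd.2 = true := by revert h2; cases hd.2 <;> simp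
          exact Prod.ext h1.symm this
        rcases tl with _ | ⟨a, t⟩
        · -- β = σ₁
          left
          have : w = FreeGroup.of i0 := by
            rw [← FreeGroup.mk_toWord (x := w), hW, hhd]; rfl
          rw [← hw, this]; rfl
        · right
          refine ⟨i, FreeGroup.mk ((i0, false) :: w.toWord), hw', ?_, ?_⟩
          · rw [htl]
            intro l hl
            exact hall l (List.mem_cons_of_mem _ hl)
          · rw [htl]
            by_cases hii : i = i0
            · -- all letters have index i0
              refine ⟨a, List.mem_cons_self, ?_⟩
              have := (hall a (List.mem_cons_of_mem _ (List.mem_cons_self))).1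
              rw [hii] at this ⊢
              exact le_antisymm this (by simp [hi0, Fin.le_def])
            · rcases List.mem_cons.mp hl₀ with hl₀ | hl₀
              · exfalso; apply hii
                rw [← hl₀i, hl₀, hhd]
              · exact ⟨l₀, hl₀, hl₀i⟩
      · -- no cancellation
        have htl : (FreeGroup.mk ((i0, false) :: w.toWord)).toWord
            = (i0, false) :: hd :: tl := by
          rw [FreeGroup.toWord_mk, hW, hred]; exact if_neg hc
        have hii : i ≠ i0 := by
          intro hii
          apply hc
          have h1 := hall hd (List.mem_cons_self)
          have hle : hd.1 = i0 := by
            have := h1.1; rw [hii] at this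
            exact le_antisymm this (by simp [hi0, Fin.le_def])
          have h2 : hd.2 = true := h1.2 (hle.trans hii.symm)
          exact ⟨hle.symm, by rw [h2]; rfl⟩
        right
        refine ⟨i, FreeGroup.mk ((i0, false) :: w.toWord), hw', ?_, ?_⟩
        · rw [htl]
          intro l hl
          rcases List.mem_cons.mp hl with rfl | hl
          · constructor
            · simp [hi0, Fin.le_def]
            · intro h; exact absurd h.symm hii
          · exact hall l hl
        · rw [htl]
          exact ⟨l₀, List.mem_cons_of_mem _ hl₀, hl₀i⟩
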